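/- Let A be a preabelian category and let B be a full additive subcategory of A. Then: (1) B is coreflective if and only if B is precovering and closed under taking cokernels (i.e., the cokernel in A of any morphism between objects of B belongs to B); (2) B is reflective if and only if B is preenveloping and closed under taking kernels. -/

import Mathlib

open CategoryTheory Limits

universe w v u

namespace PaperStmt

variable {C : Type u} [Category.{v} C]

/-- The subcategory (object property) `B` is closed under isomorphisms. -/
def ClosedUnderIso (B : C → Prop) : Prop :=
  ∀ ⦃X Y : C⦄, (X ≅ Y) → B X → B Y

/-- `B` is closed under direct summands (retracts). -/
def ClosedUnderSummands (B : C → Prop) : Prop :=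
  ∀ ⦃X Y : C⦄, B X → (∃ (s : Y ⟶ X) (r : X ⟶ Y), s ≫ r = 𝟙 Y) → B Y

/-- `f : X ⟶ A` is a `B`-precover of `A`. -/
def IsPrecover (B : C → Prop) {X A : C} (f : X ⟶ A) : Prop :=
  B X ∧ ∀ ⦃Y : C⦄, B Y → ∀ g : Y ⟶ A, ∃ h : Y ⟶ X, h ≫ f = g

/-- `B` is a precovering subcategory. -/
def Precovering (B : C → Prop) : Prop :=
  ∀ A : C, ∃ (X : C) (f : X ⟶ A), IsPrecover B f

/-- `f : A ⟶ X` is a `B`-preenvelope of `A`. -/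
def IsPreenvelope (B : C → Prop) {A X : C} (f : A ⟶ X) : Prop :=
  B X ∧ ∀ ⦃Y : C⦄, B Y → ∀ g : A ⟶ Y, ∃ h : X ⟶ Y, f ≫ h = g

/-- `B` is a preenveloping subcategory. -/
def Preenveloping (B : C → Prop) : Prop :=
  ∀ A : C, ∃ (X : C) (f : A ⟶ X), IsPreenvelope B f

/-- `f : X ⟶ A` is a `B`-coreflection of `A`. -/
def IsCoreflection (B : C → Prop) {X A : C} (f : X ⟶ A) : Prop :=
  B X ∧ ∀ ⦃Y : C⦄, B Y → ∀ g : Y ⟶ A, ∃! h : Y ⟶ X, h ≫ f = g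

/-- `B` is a coreflective subcategory: the inclusion has a right adjoint. -/
def IsCoreflectiveSub (B : C → Prop) : Prop :=
  (ObjectProperty.ι B).IsLeftAdjoint

/-- `B` is a reflective subcategory: the inclusion has a left adjoint. -/
def IsReflectiveSub (B : C → Prop) : Prop :=
  (ObjectProperty.ι B).IsRightAdjoint

section Zero

variable [HasZeroMorphisms C]

/-- `k` is a pseudokernel of `f`. -/
def IsPseudokernel {K X Y : C} (f : X ⟶ Y) (k : K ⟶ X) : Prop :=
  k ≫ f = 0 ∧ ∀ ⦃K' : C⦄ (k' : K' ⟶ X), k' ≫ f = 0 → ∃ t : K' ⟶ K, t ≫ k = k'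

/-- `c` is a pseudocokernel of `f`. -/
def IsPseudocokernel {X Y Q : C} (f : X ⟶ Y) (c : Y ⟶ Q) : Prop :=
  f ≫ c = 0 ∧ ∀ ⦃Q' : C⦄ (c' : Y ⟶ Q'), f ≫ c' = 0 → ∃ t : Q ⟶ Q', c ≫ t = c'

end Zero

/-- `C` has pseudokernels. -/
def HasPseudokernels (C : Type u) [Category.{v} C] [HasZeroMorphisms C] : Prop :=
  ∀ ⦃X Y : C⦄ (f : X ⟶ Y), ∃ (K : C) (k : K ⟶ X), IsPseudokernel f k

/-- `C` has pseudocokernels. -/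
def HasPseudocokernels (C : Type u) [Category.{v} C] [HasZeroMorphisms C] : Prop :=
  ∀ ⦃X Y : C⦄ (f : X ⟶ Y), ∃ (Q : C) (c : Y ⟶ Q), IsPseudocokernel f c

end PaperStmt

namespace PaperStmt

section Aux

variable {C : Type u} [Category.{v} C]

def IsCoreflection' (B : C → Prop) {X A : C} (f : X ⟶ A) : Prop :=
  B X ∧ ∀ ⦃Y : C⦄, B Y → ∀ g : Y ⟶ A, ∃! h : Y ⟶ X, h ≫ f = g

def IsReflection' (B : C → Prop) {A X : C} (f : A ⟶ X) : Prop :=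
  B X ∧ ∀ ⦃Y : C⦄, B Y → ∀ g : A ⟶ Y, ∃! h : X ⟶ Y, f ≫ h = g

theorem isLeftAdjoint_of_coreflections' {B : C → Prop}
    (h : ∀ A : C, ∃ (X : C) (f : X ⟶ A), IsCoreflection' B f) :
    (ObjectProperty.ι B).IsLeftAdjoint := by
  have : ∀ A : C, HasTerminal (CostructuredArrow (ObjectProperty.ι B) A) := by
    intro A
    obtain ⟨X, f, hX, hf⟩ := h A
    refine IsTerminal.hasTerminal
      (X := CostructuredArrow.mk
        (show (ObjectProperty.ι B).obj ⟨X, hX⟩ ⟶ A from f)) (IsTerminal.ofUniqueHom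
        (fun Y => CostructuredArrow.homMk (ObjectProperty.homMk (hf Y.left.property Y.hom).exists.choose)
          (by simpa using (hf Y.left.property Y.hom).exists.choose_spec)) ?_)
    intro Y m
    have hw := m.w
    simp at hw
    apply CostructuredArrow.hom_ext
    simp only [CostructuredArrow.homMk_left]
    obtain ⟨u, hu, huniq⟩ := hf Y.left.property Y.hom
    exact InducedCategory.hom_ext ((huniq _ hw).trans (huniq _ (hf Y.left.property Y.hom).exists.choose_spec).symm)
  exact isLeftAdjoint_of_costructuredArrowTerminals _

theorem coreflections_of_isLeftAdjoint' {B : C → Prop}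
    (hB : (ObjectProperty.ι B).IsLeftAdjoint) :
    ∀ A : C, ∃ (X : C) (f : X ⟶ A), IsCoreflection' B f := by
  obtain ⟨G, ⟨adj⟩⟩ := hB.exists_rightAdjoint
  intro A
  refine ⟨(G.obj A).obj, adj.counit.app A, (G.obj A).property, ?_⟩
  intro Y hY g
  refine ⟨(adj.homEquiv ⟨Y, hY⟩ A g).hom, ?_, ?_⟩
  · have : (adj.homEquiv ⟨Y, hY⟩ A).symm (adj.homEquiv ⟨Y, hY⟩ A g) =
        (ObjectProperty.ι B).map (adj.homEquiv ⟨Y, hY⟩ A g) ≫ adj.counit.app A :=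
      adj.homEquiv_counit _ _ _
    rw [Equiv.symm_apply_apply] at this
    exact this.symm
  · intro h' hh'
    have : (adj.homEquiv ⟨Y, hY⟩ A).symm (ObjectProperty.homMk h') = g := by
      rw [adj.homEquiv_counit _ _ _]; exact hh'
    exact congrArg InducedCategory.Hom.hom ((Equiv.symm_apply_eq _).mp this)

theorem isRightAdjoint_of_reflections' {B : C → Prop}
    (h : ∀ A : C, ∃ (X : C) (f : A ⟶ X), IsReflection' B f) :
    (ObjectProperty.ι B).IsRightAdjoint := by
  have : ∀ A : C, HasInitial (StructuredArrow A (ObjectProperty.ι B)) := by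
    intro A
    obtain ⟨X, f, hX, hf⟩ := h A
    refine IsInitial.hasInitial
      (X := StructuredArrow.mk
        (show A ⟶ (ObjectProperty.ι B).obj ⟨X, hX⟩ from f)) (IsInitial.ofUniqueHom
        (fun Y => StructuredArrow.homMk (ObjectProperty.homMk (hf Y.right.property Y.hom).exists.choose)
          (by simpa using (hf Y.right.property Y.hom).exists.choose_spec)) ?_)
    intro Y m
    have hw := m.w
    simp at hw
    apply StructuredArrow.hom_ext
    simp only [StructuredArrow.homMk_right]
    obtain ⟨u, hu, huniq⟩ := hf Y.right.property Y.hom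
    exact InducedCategory.hom_ext ((huniq _ hw).trans (huniq _ (hf Y.right.property Y.hom).exists.choose_spec).symm)
  exact isRightAdjointOfStructuredArrowInitials _

theorem reflections_of_isRightAdjoint' {B : C → Prop}
    (hB : (ObjectProperty.ι B).IsRightAdjoint) :
    ∀ A : C, ∃ (X : C) (f : A ⟶ X), IsReflection' B f := by
  obtain ⟨L, ⟨adj⟩⟩ := hB.exists_leftAdjoint
  intro A
  refine ⟨(L.obj A).obj, adj.unit.app A, (L.obj A).property, ?_⟩
  intro Y hY g
  refine ⟨((adj.homEquiv A ⟨Y, hY⟩).symm g).hom, ?_, ?_⟩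
  · have : adj.homEquiv A ⟨Y, hY⟩ ((adj.homEquiv A ⟨Y, hY⟩).symm g) =
        adj.unit.app A ≫ (ObjectProperty.ι B).map ((adj.homEquiv A ⟨Y, hY⟩).symm g) :=
      adj.homEquiv_unit _ _ _
    rw [Equiv.apply_symm_apply] at this
    exact this.symm
  · intro h' hh'
    have : adj.homEquiv A ⟨Y, hY⟩ (ObjectProperty.homMk h') = g := by
      rw [adj.homEquiv_unit _ _ _]; exact hh'
    exact congrArg InducedCategory.Hom.hom ((Equiv.eq_symm_apply _).mpr this)

end Aux

section MainAux

variable {A : Type u} [Category.{v} A] [Preadditive A]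
  [HasKernels A] [HasCokernels A]
  (B : A → Prop)

theorem main_coreflective (hiso : ∀ ⦃X Y : A⦄, (X ≅ Y) → B X → B Y) :
    (ObjectProperty.ι B).IsLeftAdjoint ↔
      ((∀ A₀ : A, ∃ (X : A) (f : X ⟶ A₀), B X ∧
          ∀ ⦃Y : A⦄, B Y → ∀ g : Y ⟶ A₀, ∃ h : Y ⟶ X, h ≫ f = g) ∧
        ∀ ⦃X Y : A⦄, B X → B Y → ∀ f : X ⟶ Y, B (cokernel f)) := by
  constructor
  · intro hB
    have hcor := coreflections_of_isLeftAdjoint' hB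
    constructor
    · intro A₀
      obtain ⟨X, f, hX, hf⟩ := hcor A₀
      exact ⟨X, f, hX, fun Y hY g => (hf hY g).exists⟩
    · intro X Y hX hY f
      obtain ⟨Cc, c, hC, hc⟩ := hcor (cokernel f)
      obtain ⟨h, hh, -⟩ := hc hY (cokernel.π f)
      have hfh : f ≫ h = 0 := by
        obtain ⟨u, hu, huniq⟩ := hc hX 0
        rw [huniq (f ≫ h) (by show (f ≫ h) ≫ c = 0; rw [Category.assoc, hh, cokernel.condition]),
          huniq 0 (by simp)]
      have htc : cokernel.desc f h hfh ≫ c = 𝟙 (cokernel f) := by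
        rw [← cancel_epi (cokernel.π f), Category.comp_id, ← Category.assoc,
          cokernel.π_desc, hh]
      have hct : c ≫ cokernel.desc f h hfh = 𝟙 Cc := by
        obtain ⟨u, hu, huniq⟩ := hc hC c
        rw [huniq (c ≫ cokernel.desc f h hfh) (by show (c ≫ cokernel.desc f h hfh) ≫ c = c; rw [Category.assoc, htc, Category.comp_id]),
          huniq (𝟙 Cc) (by simp)]
      exact hiso (Iso.mk c (cokernel.desc f h hfh) hct htc) hC
  · rintro ⟨hpre, hcok⟩
    apply isLeftAdjoint_of_coreflections'
    intro A₀
    obtain ⟨X, f, hX, hf⟩ := hpre A₀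
    obtain ⟨X', g, hX', hg⟩ := hpre (kernel f)
    set q : X' ⟶ X := g ≫ kernel.ι f with hq
    have hqf : q ≫ f = 0 := by rw [hq, Category.assoc, kernel.condition, comp_zero]
    set c : cokernel q ⟶ A₀ := cokernel.desc q f hqf with hcdef
    have key : ∀ ⦃Z : A⦄, B Z → ∀ u : Z ⟶ X, u ≫ f = 0 → u ≫ cokernel.π q = 0 := by
      intro Z hZ u hu
      obtain ⟨w, hw⟩ := hg hZ (kernel.lift f u hu)
      have : u = w ≫ q := by
        rw [hq, ← Category.assoc, hw, kernel.lift_ι]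
      rw [this, Category.assoc, cokernel.condition, comp_zero]
    obtain ⟨r, hr⟩ := hf (hcok hX' hX q) c
    have hrπ : r ≫ cokernel.π q = 𝟙 (cokernel q) := by
      have h1 : (cokernel.π q ≫ r - 𝟙 X) ≫ f = 0 := by
        rw [Preadditive.sub_comp, Category.id_comp, Category.assoc, hr, hcdef,
          cokernel.π_desc, sub_self]
      have h2 := key hX _ h1
      rw [Preadditive.sub_comp, Category.id_comp, Category.assoc, sub_eq_zero] at h2
      rw [← cancel_epi (cokernel.π q), Category.comp_id]
      exact h2
    refine ⟨cokernel q, c, hcok hX' hX q, ?_⟩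
    intro Y hY a
    obtain ⟨h, hh⟩ := hf hY a
    have hfac : (h ≫ cokernel.π q) ≫ c = a := by
      rw [Category.assoc, hcdef, cokernel.π_desc, hh]
    refine ⟨h ≫ cokernel.π q, hfac, ?_⟩
    intro h' hh'
    have hd : (h' - h ≫ cokernel.π q) ≫ c = 0 := by
      rw [Preadditive.sub_comp, hh', hfac, sub_self]
    have hdr : ((h' - h ≫ cokernel.π q) ≫ r) ≫ f = 0 := by
      rw [Category.assoc, hr, hd]
    have hk := key hY _ hdr
    have : (h' - h ≫ cokernel.π q) ≫ 𝟙 (cokernel q) = 0 := by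
      rw [← hrπ, ← Category.assoc]; exact hk
    rw [Category.comp_id, sub_eq_zero] at this
    exact this

theorem main_reflective (hiso : ∀ ⦃X Y : A⦄, (X ≅ Y) → B X → B Y) :
    (ObjectProperty.ι B).IsRightAdjoint ↔
      ((∀ A₀ : A, ∃ (X : A) (f : A₀ ⟶ X), B X ∧
          ∀ ⦃Y : A⦄, B Y → ∀ g : A₀ ⟶ Y, ∃ h : X ⟶ Y, f ≫ h = g) ∧
        ∀ ⦃X Y : A⦄, B X → B Y → ∀ f : X ⟶ Y, B (kernel f)) := by
  constructor
  · intro hB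
    have href := reflections_of_isRightAdjoint' hB
    constructor
    · intro A₀
      obtain ⟨X, f, hX, hf⟩ := href A₀
      exact ⟨X, f, hX, fun Y hY g => (hf hY g).exists⟩
    · intro X Y hX hY f
      obtain ⟨Cc, e, hC, he⟩ := href (kernel f)
      obtain ⟨h, hh, -⟩ := he hX (kernel.ι f)
      have hhf : h ≫ f = 0 := by
        obtain ⟨u, hu, huniq⟩ := he hY 0
        rw [huniq (h ≫ f) (by show e ≫ h ≫ f = 0; rw [← Category.assoc, hh, kernel.condition]),
          huniq 0 (by simp)]
      have het : e ≫ kernel.lift f h hhf = 𝟙 (kernel f) := by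
        rw [← cancel_mono (kernel.ι f), Category.id_comp, Category.assoc,
          kernel.lift_ι, hh]
      have hte : kernel.lift f h hhf ≫ e = 𝟙 Cc := by
        obtain ⟨u, hu, huniq⟩ := he hC e
        rw [huniq (kernel.lift f h hhf ≫ e) (by show e ≫ kernel.lift f h hhf ≫ e = e; rw [← Category.assoc, het, Category.id_comp]),
          huniq (𝟙 Cc) (by simp)]
      exact hiso (Iso.mk (kernel.lift f h hhf) e hte het) hC
  · rintro ⟨hpre, hker⟩
    apply isRightAdjoint_of_reflections'
    intro A₀
    obtain ⟨X, f, hX, hf⟩ := hpre A₀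
    obtain ⟨X', g, hX', hg⟩ := hpre (cokernel f)
    set q : X ⟶ X' := cokernel.π f ≫ g with hq
    have hfq : f ≫ q = 0 := by rw [hq, ← Category.assoc, cokernel.condition, zero_comp]
    set e : A₀ ⟶ kernel q := kernel.lift q f hfq with hedef
    have key : ∀ ⦃Z : A⦄, B Z → ∀ u : X ⟶ Z, f ≫ u = 0 → kernel.ι q ≫ u = 0 := by
      intro Z hZ u hu
      obtain ⟨w, hw⟩ := hg hZ (cokernel.desc f u hu)
      have : u = q ≫ w := by
        rw [hq, Category.assoc, hw, cokernel.π_desc]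
      rw [this, ← Category.assoc, kernel.condition, zero_comp]
    obtain ⟨r, hr⟩ := hf (hker hX hX' q) e
    have hιr : kernel.ι q ≫ r = 𝟙 (kernel q) := by
      have h1 : f ≫ (r ≫ kernel.ι q - 𝟙 X) = 0 := by
        rw [Preadditive.comp_sub, Category.comp_id, ← Category.assoc, hr, hedef,
          kernel.lift_ι, sub_self]
      have h2 := key hX _ h1
      rw [Preadditive.comp_sub, Category.comp_id, ← Category.assoc, sub_eq_zero] at h2
      rw [← cancel_mono (kernel.ι q), Category.id_comp]
      exact h2
    refine ⟨kernel q, e, hker hX hX' q, ?_⟩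
    intro Y hY a
    obtain ⟨h, hh⟩ := hf hY a
    have hfac : e ≫ kernel.ι q ≫ h = a := by
      rw [← Category.assoc, hedef, kernel.lift_ι, hh]
    refine ⟨kernel.ι q ≫ h, hfac, ?_⟩
    intro h' hh'
    have hd : e ≫ (h' - kernel.ι q ≫ h) = 0 := by
      rw [Preadditive.comp_sub, hh', hfac, sub_self]
    have hdr : f ≫ (r ≫ (h' - kernel.ι q ≫ h)) = 0 := by
      rw [← Category.assoc, hr, hd]
    have hk := key hY _ hdr
    have : 𝟙 (kernel q) ≫ (h' - kernel.ι q ≫ h) = 0 := by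
      rw [← hιr, Category.assoc]; exact hk
    rw [Category.id_comp, sub_eq_zero] at this
    exact this

end MainAux



/-- Corollary 7.2: in a preabelian category, an additive subcategory is
coreflective iff it is precovering and closed under cokernels, and reflective iff it is
preenveloping and closed under kernels. -/
theorem preabelian_coreflective_reflective_iff
    {A : Type u} [Category.{v} A] [Preadditive A] [HasFiniteBiproducts A] [HasBinaryBiproducts A]
    [HasKernels A] [HasCokernels A]
    (B : A → Prop) (hiso : ClosedUnderIso B)
    (hzero : ∃ Z : A, IsZero Z ∧ B Z)
    (hsum : ∀ ⦃X Y : A⦄, B X → B Y → B (X ⊞ Y)) :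
    (IsCoreflectiveSub B ↔
      (Precovering B ∧ ∀ ⦃X Y : A⦄, B X → B Y → ∀ f : X ⟶ Y, B (cokernel f))) ∧
    (IsReflectiveSub B ↔
      (Preenveloping B ∧ ∀ ⦃X Y : A⦄, B X → B Y → ∀ f : X ⟶ Y, B (kernel f))) := by
  constructor
  · exact main_coreflective B hiso
  · exact main_reflective B hiso

end PaperStmt
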